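/- Let X be a real random variable with finite expectation whose cumulative distribution function F is continuous, and let s ∈ (−1,0). Then the cumulative Tsallis entropy Δ_s(X) = (1/s) ∫_ℝ F(x)(1 − F(x)^s) dx is finite if and only if ∫_{−∞}^0 F(x)^{1+s} dx < ∞. -/

import Mathlib

open MeasureTheory Set

private lemma tail_neg_finite {Ω : Type*} [MeasureSpace Ω]
    [IsProbabilityMeasure (volume : Measure Ω)]
    (X : Ω → ℝ) (hXm : Measurable X) (hXint : Integrable X) :
    ∫⁻ x in Iic (0:ℝ), (volume : Measure Ω) {ω | X ω ≤ x} < ⊤ := by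
  set μ := (volume : Measure Ω) with hμ
  have hfm : Measurable (fun ω => max (-(X ω)) 0) := hXm.neg.max measurable_const
  have hfin : ∫⁻ ω, ENNReal.ofReal (max (-(X ω)) 0) ∂μ < ⊤ := by
    refine lt_of_le_of_lt (lintegral_mono fun ω => ?_) hXint.2
    rw [← ofReal_norm]
    exact ENNReal.ofReal_le_ofReal (max_le (neg_le_abs _) (abs_nonneg _))
  have heq := lintegral_eq_lintegral_meas_le μ
    (f := fun ω => max (-(X ω)) 0)
    (Filter.Eventually.of_forall fun ω => le_max_right _ _) hfm.aemeasurable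
  rw [heq] at hfin
  have hsub : ∫⁻ x in Iic (0:ℝ), μ {ω | X ω ≤ x} = ∫⁻ x in Ici (0:ℝ), μ {ω | X ω ≤ -x} := by
    have := (Measure.measurePreserving_neg (volume : Measure ℝ)).setLIntegral_comp_preimage_emb
      measurableEmbedding_neg (fun x => μ {ω | X ω ≤ x}) (Iic 0)
    rw [← this]
    congr 1
    simp
  have hIci : ∫⁻ x in Ici (0:ℝ), μ {ω | X ω ≤ -x} = ∫⁻ x in Ioi (0:ℝ), μ {ω | X ω ≤ -x} :=
    (setLIntegral_congr Ioi_ae_eq_Ici).symm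
  rw [hsub, hIci]
  refine lt_of_le_of_lt ?_ hfin
  have hanti : Antitone (fun t : ℝ => μ {ω | t ≤ max (-(X ω)) 0}) := by
    intro a b hab
    exact measure_mono fun ω h => le_trans hab h
  refine setLIntegral_mono_ae hanti.measurable.aemeasurable
    (Filter.Eventually.of_forall fun x hx => ?_)
  refine measure_mono fun ω h => ?_
  have h' : X ω ≤ -x := h
  exact le_trans (by linarith : x ≤ -X ω) (le_max_left _ _)

private lemma tail_pos_finite {Ω : Type*} [MeasureSpace Ω]
    [IsProbabilityMeasure (volume : Measure Ω)]
    (X : Ω → ℝ) (hXm : Measurable X) (hXint : Integrable X) :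
    ∫⁻ x in Ioi (0:ℝ), (1 - (volume : Measure Ω) {ω | X ω ≤ x}) < ⊤ := by
  set μ := (volume : Measure Ω) with hμ
  have hfm : Measurable (fun ω => max (X ω) 0) := hXm.max measurable_const
  have hfin : ∫⁻ ω, ENNReal.ofReal (max (X ω) 0) ∂μ < ⊤ := by
    refine lt_of_le_of_lt (lintegral_mono fun ω => ?_) hXint.2
    rw [← ofReal_norm]
    exact ENNReal.ofReal_le_ofReal (max_le (le_abs_self _) (abs_nonneg _))
  have heq := lintegral_eq_lintegral_meas_le μ
    (f := fun ω => max (X ω) 0)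
    (Filter.Eventually.of_forall fun ω => le_max_right _ _) hfm.aemeasurable
  rw [heq] at hfin
  refine lt_of_le_of_lt ?_ hfin
  have hanti : Antitone (fun t : ℝ => μ {ω | t ≤ max (X ω) 0}) := by
    intro a b hab
    exact measure_mono fun ω h => le_trans hab h
  refine setLIntegral_mono_ae hanti.measurable.aemeasurable
    (Filter.Eventually.of_forall fun x hx => ?_)
  have hcompl : (1 : ENNReal) - μ {ω | X ω ≤ x} = μ {ω | X ω ≤ x}ᶜ := by
    rw [measure_compl (show MeasurableSet {ω | X ω ≤ x} from hXm measurableSet_Iic)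
      (measure_ne_top _ _), measure_univ]
  rw [hcompl]
  refine measure_mono fun ω h => ?_
  have h' : x < X ω := lt_of_not_ge h
  exact le_trans h'.le (le_max_left _ _)

/-- For an integrable real random variable `X` with continuous cdf `F` and
`s ∈ (−1,0)`, the cumulative Tsallis entropy `Δ_s(X) = (1/s) ∫_ℝ F(x)(1 − F(x)^s) dx` is
finite if and only if `∫_{−∞}^0 F(x)^{1+s} dx < ∞`. -/
theorem cumulative_tsallis_entropy_finite_iff
    {Ω : Type*} [MeasureSpace Ω] [IsProbabilityMeasure (volume : Measure Ω)]
    (X : Ω → ℝ) (hXm : Measurable X) (hXint : Integrable X)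
    (F : ℝ → ℝ) (hF : ∀ x, F x = ((volume : Measure Ω) {ω | X ω ≤ x}).toReal)
    (hFcont : Continuous F)
    (s : ℝ) (hs : s ∈ Ioo (-1 : ℝ) 0) :
    (∫⁻ x : ℝ, ENNReal.ofReal ((1 / s) * (F x * (1 - F x ^ s)))) < ⊤
      ↔ (∫⁻ x in Iic (0 : ℝ), ENNReal.ofReal (F x ^ (1 + s))) < ⊤ := by
  obtain ⟨hs1, hs2⟩ := hs
  set μ := (volume : Measure Ω) with hμ
  have hsne : s ≠ 0 := ne_of_lt hs2
  have ha0 : (0:ℝ) < 1 + s := by linarith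
  have hF0 : ∀ x, 0 ≤ F x := fun x => by rw [hF x]; exact ENNReal.toReal_nonneg
  have hF1 : ∀ x, F x ≤ 1 := fun x => by
    rw [hF x]
    have := prob_le_one (μ := μ) (s := {ω | X ω ≤ x})
    simpa using ENNReal.toReal_mono (by simp) this
  have hFmeas : Measurable F := hFcont.measurable
  have hGmeas : Measurable fun x => F x ^ (1 + s) - F x :=
    (hFmeas.pow_const _).sub hFmeas
  -- pointwise identity
  have hptid : ∀ x, (1 / s) * (F x * (1 - F x ^ s)) = (-(1/s)) * (F x ^ (1 + s) - F x) := by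
    intro x
    rcases eq_or_lt_of_le (hF0 x) with h0 | h0
    · rw [← h0, Real.zero_rpow hsne, Real.zero_rpow (ne_of_gt ha0)]
      ring
    · rw [Real.rpow_add h0, Real.rpow_one]
      ring
  have hGnn : ∀ x, 0 ≤ F x ^ (1 + s) - F x := by
    intro x
    have : F x ≤ F x ^ (1 + s) := by
      calc F x = F x ^ (1:ℝ) := (Real.rpow_one _).symm
      _ ≤ F x ^ (1 + s) := Real.rpow_le_rpow_of_exponent_ge' (hF0 x) (hF1 x) (le_of_lt ha0)
          (by linarith)
    linarith
  set c : ENNReal := ENNReal.ofReal (-(1/s)) with hc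
  have hcr : (0:ℝ) < -(1/s) := by
    have := one_div_neg.mpr hs2
    linarith
  have hcpos : c ≠ 0 := by
    simp only [hc, ne_eq, ENNReal.ofReal_eq_zero, not_le]
    exact hcr
  have lhs_eq : (∫⁻ x : ℝ, ENNReal.ofReal ((1 / s) * (F x * (1 - F x ^ s))))
      = c * ∫⁻ x : ℝ, ENNReal.ofReal (F x ^ (1 + s) - F x) := by
    rw [← lintegral_const_mul c (hGmeas.ennreal_ofReal)]
    congr 1
    ext x
    rw [hptid x, ENNReal.ofReal_mul (by positivity)]
  have split : (∫⁻ x : ℝ, ENNReal.ofReal (F x ^ (1 + s) - F x))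
      = (∫⁻ x in Iic (0:ℝ), ENNReal.ofReal (F x ^ (1 + s) - F x))
        + ∫⁻ x in Ioi (0:ℝ), ENNReal.ofReal (F x ^ (1 + s) - F x) := by
    rw [← lintegral_add_compl (μ := volume) _ (measurableSet_Iic (a := (0:ℝ))), compl_Iic]
  -- the right tail is always finite
  have hI2 : (∫⁻ x in Ioi (0:ℝ), ENNReal.ofReal (F x ^ (1 + s) - F x)) < ⊤ := by
    refine lt_of_le_of_lt (lintegral_mono fun x => ?_) (tail_pos_finite X hXm hXint)
    have h1 : ENNReal.ofReal (F x ^ (1 + s) - F x) ≤ ENNReal.ofReal (1 - F x) := by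
      refine ENNReal.ofReal_le_ofReal ?_
      have : F x ^ (1 + s) ≤ 1 := Real.rpow_le_one (hF0 x) (hF1 x) (le_of_lt ha0)
      linarith
    refine le_trans h1 (le_of_eq ?_)
    rw [ENNReal.ofReal_sub _ (hF0 x), ENNReal.ofReal_one, hF x,
      ENNReal.ofReal_toReal (measure_ne_top _ _)]
  -- the left piece is finite iff RHS
  have hFIic : (∫⁻ x in Iic (0:ℝ), ENNReal.ofReal (F x)) < ⊤ := by
    refine lt_of_le_of_lt (le_of_eq ?_) (tail_neg_finite X hXm hXint)
    refine lintegral_congr fun x => ?_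
    rw [hF x, ENNReal.ofReal_toReal (measure_ne_top _ _)]
  have hiff1 : (∫⁻ x in Iic (0:ℝ), ENNReal.ofReal (F x ^ (1 + s) - F x)) < ⊤
      ↔ (∫⁻ x in Iic (0:ℝ), ENNReal.ofReal (F x ^ (1 + s))) < ⊤ := by
    constructor
    · intro h
      refine lt_of_le_of_lt ?_ (ENNReal.add_lt_top.mpr ⟨h, hFIic⟩)
      rw [← lintegral_add_left (hGmeas.ennreal_ofReal) ]
      refine lintegral_mono fun x => ?_
      calc ENNReal.ofReal (F x ^ (1 + s))
          = ENNReal.ofReal ((F x ^ (1 + s) - F x) + F x) := by congr 1; ring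
        _ ≤ _ := ENNReal.ofReal_add_le
    · intro h
      refine lt_of_le_of_lt (lintegral_mono fun x => ENNReal.ofReal_le_ofReal ?_) h
      linarith [hF0 x]
  have main : (∫⁻ x : ℝ, ENNReal.ofReal ((1 / s) * (F x * (1 - F x ^ s)))) < ⊤
      ↔ (∫⁻ x in Iic (0:ℝ), ENNReal.ofReal (F x ^ (1 + s) - F x)) < ⊤ := by
    rw [lhs_eq, split]
    constructor
    · intro h
      by_contra hA
      rw [not_lt, top_le_iff] at hA
      have : (∫⁻ x in Iic (0:ℝ), ENNReal.ofReal (F x ^ (1 + s) - F x))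
          + ∫⁻ x in Ioi (0:ℝ), ENNReal.ofReal (F x ^ (1 + s) - F x) = ⊤ := by
        rw [hA, top_add]
      rw [this, ENNReal.mul_top hcpos] at h
      exact absurd h (lt_irrefl _)
    · intro h
      exact ENNReal.mul_lt_top (by simp [hc]) (ENNReal.add_lt_top.mpr ⟨h, hI2⟩)
  rw [main, hiff1]
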